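/- arXiv:2207.08504 — 3 statements merged into one kernel-verified Lean document; each statement's English description precedes it below -/
import Mathlib

section
/- Let C be a cocomplete category and S a class of morphisms of C that contains all identities, consists of epimorphisms, and is closed under composition and under pushout along arbitrary morphisms. Then for every object a, the full subcategory of the under-category C_{a/} spanned by the morphisms a → a' belonging to S is a filtered category. -/
open CategoryTheory CategoryTheory.Limits

/-- Let `C` be a cocomplete category and `S` a class of morphisms containing all
identities, consisting of epimorphisms, closed under composition and under pushout
along arbitrary morphisms.  Then for every object `a`, the full subcategory of the
under category `C_{a/}` spanned by the morphisms `a ⟶ a'` belonging to `S` is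
filtered. -/
theorem stmt0 {C : Type*} [Category C] [HasColimits C]
    (S : MorphismProperty C)
    [S.ContainsIdentities] [S.IsStableUnderComposition] [S.IsStableUnderCobaseChange]
    (hepi : ∀ ⦃x y : C⦄ (f : x ⟶ y), S f → Epi f)
    (a : C) :
    IsFiltered (ObjectProperty.FullSubcategory (fun f : Under a => S f.hom)) := by
  have h1 : ∀ X Y : ObjectProperty.FullSubcategory (fun f : Under a => S f.hom),
      ∃ Z : ObjectProperty.FullSubcategory (fun f : Under a => S f.hom),
        Nonempty (X ⟶ Z) ∧ Nonempty (Y ⟶ Z) := by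
    intro X Y
    refine ⟨⟨Under.mk (X.obj.hom ≫ pushout.inl X.obj.hom Y.obj.hom), ?_⟩, ?_, ?_⟩
    · exact S.comp_mem _ _ X.property
        (MorphismProperty.pushout_inl X.obj.hom Y.obj.hom Y.property)
    · exact ⟨ObjectProperty.homMk (Under.homMk (pushout.inl X.obj.hom Y.obj.hom) rfl)⟩
    · exact ⟨ObjectProperty.homMk (Under.homMk (pushout.inr X.obj.hom Y.obj.hom)
        (by simpa using pushout.condition.symm))⟩
  have h2 : ∀ (X Y : ObjectProperty.FullSubcategory (fun f : Under a => S f.hom)) (u v : X ⟶ Y), u = v := by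
    intro X Y u v
    have : Epi X.obj.hom := hepi _ X.property
    apply ObjectProperty.hom_ext
    apply Under.UnderMorphism.ext
    have hu : X.obj.hom ≫ u.hom.right = Y.obj.hom := Under.w u.hom
    have hv : X.obj.hom ≫ v.hom.right = Y.obj.hom := Under.w v.hom
    exact (cancel_epi X.obj.hom).mp (hu.trans hv.symm)
  refine { nonempty := ⟨⟨Under.mk (𝟙 a), S.id_mem a⟩⟩,
           cocone_objs := ?_, cocone_maps := ?_ }
  · intro X Y
    obtain ⟨Z, ⟨f⟩, ⟨g⟩⟩ := h1 X Y
    exact ⟨Z, f, g, trivial⟩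
  · intro X Y u v
    exact ⟨Y, 𝟙 Y, by rw [h2 X Y u v]⟩
end

section
/- Let C be a cocomplete category and S a class of epimorphisms of C containing all identities, closed under composition, under pushouts, and under filtered colimits (i.e., the transfinite/filtered colimit of a filtered diagram of S-morphisms under a is again in S), and suppose that for each object a the full subcategory of C_{a/} spanned by S-morphisms is essentially small. Then for every object a there exists a morphism r_a : a → Ra in S such that Ra has the right lifting property against every morphism of S. -/
open CategoryTheory CategoryTheory.Limits

universe v u

/-- Let `C` be a cocomplete category and `S` a class of epimorphisms containing the
identities, closed under composition, under pushouts and under filtered colimits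
(the colimit of a filtered diagram of `S`-morphisms under `a` is again an
`S`-morphism under `a`), such that for each object `a` the full subcategory of
`C_{a/}` spanned by the `S`-morphisms is essentially small.  Then for every object
`a` there is a morphism `r_a : a ⟶ Ra` in `S` such that `Ra` has the right lifting
property against every morphism of `S`. -/
theorem stmt3 {C : Type u} [Category.{v} C] [HasColimits C]
    (S : MorphismProperty C)
    [S.ContainsIdentities] [S.IsStableUnderComposition] [S.IsStableUnderCobaseChange]
    (hepi : ∀ ⦃x y : C⦄ (f : x ⟶ y), S f → Epi f)
    (hfiltered : ∀ (a : C) (J : Type v) [SmallCategory J] [IsFiltered J]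
      (F : J ⥤ Under a), (∀ j : J, S (F.obj j).hom) →
        ∀ j : J, S ((F.obj j).hom ≫ colimit.ι (F ⋙ Under.forget a) j))
    (hsmall : ∀ a : C, EssentiallySmall.{v} (ObjectProperty.FullSubcategory (fun f : Under a => S f.hom)))
    (a : C) :
    ∃ (Ra : C) (r : a ⟶ Ra), S r ∧
      ∀ ⦃x y : C⦄ (f : x ⟶ y), S f → ∀ u : x ⟶ Ra, ∃ v : y ⟶ Ra, f ≫ v = u := by
  classical
  set D := ObjectProperty.FullSubcategory (fun f : Under a => S f.hom) with hDdef
  haveI : EssentiallySmall.{v} D := hsmall a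
  -- `D` is filtered
  haveI hDfoe : IsFilteredOrEmpty D := by
    constructor
    · intro d d'
      refine ⟨⟨Under.mk (d.obj.hom ≫ pushout.inl d.obj.hom d'.obj.hom),
          S.comp_mem _ _ d.property (S.pushout_inl _ _ d'.property)⟩,
        ObjectProperty.homMk (Under.homMk (pushout.inl d.obj.hom d'.obj.hom) rfl),
        ObjectProperty.homMk (Under.homMk (pushout.inr d.obj.hom d'.obj.hom) pushout.condition.symm), trivial⟩
    · intro d d' f g
      refine ⟨d', 𝟙 d', ?_⟩
      haveI : Epi d.obj.hom := hepi _ d.property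
      have hfg : f.hom.right = g.hom.right := by
        rw [← cancel_epi d.obj.hom, Under.w f.hom, Under.w g.hom]
      have : f = g := by
        apply ObjectProperty.hom_ext
        apply CommaMorphism.ext
        · apply Subsingleton.elim
        · exact hfg
      rw [this]
  haveI hDf : IsFiltered D := { nonempty := ⟨⟨Under.mk (𝟙 a), S.id_mem a⟩⟩ }
  set e := equivSmallModel.{v} D with hedef
  set J := SmallModel.{v} D with hJdef
  haveI : IsFiltered J := IsFiltered.of_equivalence e
  set F : J ⥤ Under a := e.inverse ⋙ ObjectProperty.ι _ with hFdef
  have hF : ∀ j : J, S (F.obj j).hom := fun j => (e.inverse.obj j).property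
  set Ra := colimit (F ⋙ Under.forget a) with hRadef
  set d0 : D := ⟨Under.mk (𝟙 a), S.id_mem a⟩ with hd0def
  set j0 : J := e.functor.obj d0 with hj0def
  set r : a ⟶ Ra := (F.obj j0).hom ≫ colimit.ι (F ⋙ Under.forget a) j0 with hrdef
  have hr : S r := hfiltered a J F hF j0
  -- every structure map composed with the colimit coprojection is `r`
  have key : ∀ j : J, (F.obj j).hom ≫ colimit.ι (F ⋙ Under.forget a) j = r := by
    intro j
    have w : d0.obj.hom ≫ (e.inverse.obj j).obj.hom = (e.inverse.obj j).obj.hom := by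
      exact Category.id_comp _
    let φ : d0 ⟶ e.inverse.obj j := ObjectProperty.homMk (Under.homMk (e.inverse.obj j).obj.hom w)
    let ψ : j0 ⟶ j := e.functor.map φ ≫ e.counit.app j
    have hw : (F ⋙ Under.forget a).map ψ ≫ colimit.ι (F ⋙ Under.forget a) j =
        colimit.ι (F ⋙ Under.forget a) j0 := colimit.w (F ⋙ Under.forget a) ψ
    have h2 : (F.obj j0).hom ≫ (F.map ψ).right = (F.obj j).hom := Under.w (F.map ψ)
    rw [hrdef, ← h2]
    exact (Category.assoc _ _ _).trans (congrArg ((F.obj j0).hom ≫ ·) hw)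
  refine ⟨Ra, r, hr, ?_⟩
  intro x y f hf u
  have hinr : S (pushout.inr f u) := S.pushout_inr f u hf
  set dz : D := ⟨Under.mk (r ≫ pushout.inr f u), S.comp_mem _ _ hr hinr⟩ with hdzdef
  set jz : J := e.functor.obj dz with hjzdef
  set m : pushout f u ⟶ Ra :=
    (e.unit.app dz).hom.right ≫ colimit.ι (F ⋙ Under.forget a) jz with hmdef
  have h1 : (r ≫ pushout.inr f u) ≫ (e.unit.app dz).hom.right = (F.obj jz).hom :=
    Under.w (e.unit.app dz).hom
  have hm : pushout.inr f u ≫ m = 𝟙 Ra := by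
    haveI : Epi r := hepi r hr
    rw [← cancel_epi r, Category.comp_id]
    rw [hmdef]
    exact ((Category.assoc r (pushout.inr f u) _).symm.trans
      (Category.assoc (r ≫ pushout.inr f u) _ _).symm).trans
      ((congrArg (· ≫ colimit.ι (F ⋙ Under.forget a) jz) h1).trans (key jz))
  refine ⟨pushout.inl f u ≫ m, ?_⟩
  rw [← Category.assoc, pushout.condition, Category.assoc, hm, Category.comp_id]
end

section
/- With the hypotheses of the previous construction, the object Ra is essentially unique: if b is any object admitting a morphism t : a → b in S and having the right lifting property against all morphisms of S, then b is isomorphic to Ra under a. -/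
open CategoryTheory CategoryTheory.Limits

universe v u

/-- Uniqueness of the completion `Ra`: if `r : a ⟶ Ra` is an `S`-morphism whose target
has the right lifting property against all `S`-morphisms, and `t : a ⟶ b` is another
`S`-morphism whose target has the right lifting property against all `S`-morphisms,
then `b` is isomorphic to `Ra` under `a`. -/
theorem stmt4 {C : Type u} [Category.{v} C] [HasColimits C]
    (S : MorphismProperty C)
    [S.ContainsIdentities] [S.IsStableUnderComposition] [S.IsStableUnderCobaseChange]
    (hepi : ∀ ⦃x y : C⦄ (f : x ⟶ y), S f → Epi f)
    (hfiltered : ∀ (a : C) (J : Type v) [SmallCategory J] [IsFiltered J]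
      (F : J ⥤ Under a), (∀ j : J, S (F.obj j).hom) →
        ∀ j : J, S ((F.obj j).hom ≫ colimit.ι (F ⋙ Under.forget a) j))
    (hsmall : ∀ a : C, EssentiallySmall.{v} (ObjectProperty.FullSubcategory (fun f : Under a => S f.hom)))
    {a Ra b : C} (r : a ⟶ Ra) (t : a ⟶ b)
    (hr : S r)
    (hRa : ∀ ⦃x y : C⦄ (f : x ⟶ y), S f → ∀ u : x ⟶ Ra, ∃ v : y ⟶ Ra, f ≫ v = u)
    (ht : S t)
    (hb : ∀ ⦃x y : C⦄ (f : x ⟶ y), S f → ∀ u : x ⟶ b, ∃ v : y ⟶ b, f ≫ v = u) :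
    ∃ e : Ra ≅ b, r ≫ e.hom = t := by
  obtain ⟨f, hf⟩ := hb r hr t
  obtain ⟨g, hg⟩ := hRa t ht r
  have er := hepi r hr
  have et := hepi t ht
  have hfg : f ≫ g = 𝟙 Ra := by
    rw [← cancel_epi r]
    rw [← Category.assoc, hf, hg, Category.comp_id]
  have hgf : g ≫ f = 𝟙 b := by
    rw [← cancel_epi t]
    rw [← Category.assoc, hg, hf, Category.comp_id]
  exact ⟨⟨f, g, hfg, hgf⟩, hf⟩
end
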